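/- arXiv:2508.21677 — 2 statements merged into one kernel-verified Lean document; each statement's English description precedes it below -/
import Mathlib

section
/- Let P be positive definite, ρ ∈ (0,1), K, B matrices with ‖(A + BK)x‖_P ≤ ρ‖x‖_P for all x, d = ‖P^{1/2}B‖, β(x,a) = a₀‖a‖ + b₀‖Vx‖ + c₀ a bound on ‖Δ(x,a)‖, and L_β = a₀‖KP^{-1/2}‖ + b₀‖VP^{-1/2}‖. Suppose ‖x - x̄‖_P ≤ δ, a = ā + K(x - x̄), x₊ = Ax + B(a + Δ(x,a)) with ‖Δ(x,a)‖ ≤ β(x,a), and x̄₊ = Ax̄ + Bā. Then ‖x₊ - x̄₊‖_P ≤ (ρ + dL_β)δ + dβ(x̄, ā). -/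
open scoped Matrix.Norms.L2Operator
open Matrix

namespace Matrix.PosSemidef

open scoped ComplexOrder

/-- The positive semidefinite square root of a positive semidefinite matrix
(definition from the older Mathlib, since removed there). -/
noncomputable def sqrt {n 𝕜 : Type*} [RCLike 𝕜] [Fintype n] [DecidableEq n]
    {A : Matrix n n 𝕜} (hA : A.PosSemidef) : Matrix n n 𝕜 :=
  hA.1.eigenvectorUnitary.1 * diagonal ((↑) ∘ (√·) ∘ hA.1.eigenvalues) *
  (star hA.1.eigenvectorUnitary : Matrix n n 𝕜)

lemma sqrt_mul_self {n 𝕜 : Type*} [RCLike 𝕜] [Fintype n] [DecidableEq n]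
    {A : Matrix n n 𝕜} (hA : A.PosSemidef) : hA.sqrt * hA.sqrt = A := by
  let C : Matrix n n 𝕜 := hA.1.eigenvectorUnitary
  let E := diagonal ((↑) ∘ (√·) ∘ hA.1.eigenvalues : n → 𝕜)
  suffices C * (E * (star C * C) * E) * star C = A by
    change (C * E * star C) * (C * E * star C) = A
    simpa only [← Matrix.mul_assoc] using this
  have : star C * C = 1 := by simp [C]
  rw [this, Matrix.mul_one, diagonal_mul_diagonal]
  conv_rhs => rw [hA.1.spectral_theorem]
  simp only [Unitary.conjStarAlgAut_apply]
  congr 2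
  ext i j
  simp only [diagonal_apply, Function.comp_apply]
  split_ifs <;> simp [← RCLike.ofReal_mul, Real.mul_self_sqrt (hA.eigenvalues_nonneg _)]

lemma sqrt_isHermitian {n 𝕜 : Type*} [RCLike 𝕜] [Fintype n] [DecidableEq n]
    {A : Matrix n n 𝕜} (hA : A.PosSemidef) : hA.sqrt.IsHermitian := by
  have hD : (diagonal ((↑) ∘ (√·) ∘ hA.1.eigenvalues : n → 𝕜))ᴴ =
      diagonal ((↑) ∘ (√·) ∘ hA.1.eigenvalues) := by
    rw [diagonal_conjTranspose]
    congr 1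
    funext i
    simp [Pi.star_apply, RCLike.star_def]
  unfold Matrix.IsHermitian sqrt
  rw [conjTranspose_mul, conjTranspose_mul, hD]
  simp only [Unitary.coe_star, star_eq_conjTranspose, conjTranspose_conjTranspose,
    Matrix.mul_assoc]

end Matrix.PosSemidef

noncomputable def eNorm {n : ℕ} (x : Fin n → ℝ) : ℝ := Real.sqrt (x ⬝ᵥ x)

noncomputable def pNorm {n : ℕ} (P : Matrix (Fin n) (Fin n) ℝ) (x : Fin n → ℝ) : ℝ :=
  Real.sqrt (x ⬝ᵥ P *ᵥ x)

lemma eNorm_eq_norm {n : ℕ} (x : Fin n → ℝ) :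
    eNorm x = ‖(EuclideanSpace.equiv (Fin n) ℝ).symm x‖ := by
  simp only [eNorm, EuclideanSpace.norm_eq, dotProduct]
  congr 1
  refine Finset.sum_congr rfl fun i _ => ?_
  simp [Real.norm_eq_abs, sq_abs, sq]

lemma eNorm_nonneg {n : ℕ} (x : Fin n → ℝ) : 0 ≤ eNorm x := Real.sqrt_nonneg _

lemma eNorm_add_le {n : ℕ} (u v : Fin n → ℝ) : eNorm (u + v) ≤ eNorm u + eNorm v := by
  rw [eNorm_eq_norm, eNorm_eq_norm, eNorm_eq_norm, map_add]
  exact norm_add_le _ _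

lemma eNorm_mulVec_le {q n : ℕ} (M : Matrix (Fin q) (Fin n) ℝ) (x : Fin n → ℝ) :
    eNorm (M *ᵥ x) ≤ ‖M‖ * eNorm x := by
  rw [eNorm_eq_norm, eNorm_eq_norm]
  exact M.l2_opNorm_mulVec ((EuclideanSpace.equiv (Fin n) ℝ).symm x)

lemma pNorm_eq {n : ℕ} (P : Matrix (Fin n) (Fin n) ℝ) (hP : P.PosDef) (v : Fin n → ℝ) :
    pNorm P v = eNorm (hP.posSemidef.sqrt *ᵥ v) := by
  set S := hP.posSemidef.sqrt with hS
  have hsym : Sᵀ = S := by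
    have := hP.posSemidef.sqrt_isHermitian
    rwa [Matrix.IsHermitian, conjTranspose_eq_transpose_of_trivial] at this
  have hmul : S * S = P := hP.posSemidef.sqrt_mul_self
  unfold pNorm eNorm
  congr 1
  calc v ⬝ᵥ P *ᵥ v = v ⬝ᵥ S *ᵥ (S *ᵥ v) := by rw [← hmul, ← mulVec_mulVec]
    _ = (S *ᵥ v) ⬝ᵥ (S *ᵥ v) := by
        rw [Matrix.dotProduct_mulVec, ← Matrix.mulVec_transpose, hsym]

theorem stmt_4 {n m p : ℕ} (P : Matrix (Fin n) (Fin n) ℝ) (hP : P.PosDef)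
    (ρ : ℝ) (hρ : ρ ∈ Set.Ioo (0 : ℝ) 1)
    (A : Matrix (Fin n) (Fin n) ℝ) (B : Matrix (Fin n) (Fin m) ℝ)
    (K : Matrix (Fin m) (Fin n) ℝ) (V : Matrix (Fin p) (Fin n) ℝ)
    (hcontr : ∀ x : Fin n → ℝ, pNorm P ((A + B * K) *ᵥ x) ≤ ρ * pNorm P x)
    (d : ℝ) (hd : d = ‖hP.posSemidef.sqrt * B‖)
    (a₀ b₀ c₀ : ℝ) (ha₀ : 0 ≤ a₀) (hb₀ : 0 ≤ b₀) (hc₀ : 0 ≤ c₀)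
    (β : (Fin n → ℝ) → (Fin m → ℝ) → ℝ)
    (hβ : ∀ x a, β x a = a₀ * eNorm a + b₀ * eNorm (V *ᵥ x) + c₀)
    (Lβ : ℝ) (hLβ : Lβ = a₀ * ‖K * (hP.posSemidef.sqrt)⁻¹‖ + b₀ * ‖V * (hP.posSemidef.sqrt)⁻¹‖)
    (δ : ℝ) (x xb : Fin n → ℝ) (hδ : pNorm P (x - xb) ≤ δ)
    (a ab : Fin m → ℝ) (ha : a = ab + K *ᵥ (x - xb))
    (Δ : Fin m → ℝ) (hΔbound : eNorm Δ ≤ β x a)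
    (xp xbp : Fin n → ℝ)
    (hxp : xp = A *ᵥ x + B *ᵥ (a + Δ)) (hxbp : xbp = A *ᵥ xb + B *ᵥ ab) :
    pNorm P (xp - xbp) ≤ (ρ + d * Lβ) * δ + d * β xb ab := by
  set S := hP.posSemidef.sqrt with hSdef
  have hmul : S * S = P := hP.posSemidef.sqrt_mul_self
  -- S is invertible
  have hdet : IsUnit S.det := by
    have hPdet : P.det ≠ 0 := ne_of_gt hP.det_pos
    have : S.det * S.det = P.det := by rw [← det_mul, hmul]
    exact isUnit_iff_ne_zero.mpr fun h => hPdet (by rw [← this, h, mul_zero])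
  have hinv : S⁻¹ * S = 1 := Matrix.nonsing_inv_mul S hdet
  -- generic bound: eNorm (M *ᵥ e) ≤ ‖M * S⁻¹‖ * pNorm P e
  have key : ∀ {q : ℕ} (M : Matrix (Fin q) (Fin n) ℝ) (e : Fin n → ℝ),
      eNorm (M *ᵥ e) ≤ ‖M * S⁻¹‖ * pNorm P e := by
    intro q M e
    have : M *ᵥ e = (M * S⁻¹) *ᵥ (S *ᵥ e) := by
      rw [mulVec_mulVec, Matrix.mul_assoc, hinv, Matrix.mul_one]
    rw [this, pNorm_eq P hP]
    exact eNorm_mulVec_le _ _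
  have hδ0 : 0 ≤ δ := le_trans (by rw [pNorm]; exact Real.sqrt_nonneg _) hδ
  have hd0 : 0 ≤ d := hd ▸ norm_nonneg _
  set e := x - xb with he
  -- decomposition
  have hdecomp : xp - xbp = (A + B * K) *ᵥ e + B *ᵥ Δ := by
    subst hxp hxbp ha
    simp only [he, mulVec_sub, mulVec_add, add_mulVec, mulVec_mulVec]
    abel
  -- bound on β x a
  have hKe : eNorm (K *ᵥ e) ≤ ‖K * S⁻¹‖ * δ :=
    le_trans (key K e) (mul_le_mul_of_nonneg_left hδ (norm_nonneg _))
  have hVe : eNorm (V *ᵥ e) ≤ ‖V * S⁻¹‖ * δ :=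
    le_trans (key V e) (mul_le_mul_of_nonneg_left hδ (norm_nonneg _))
  have hβx : β x a ≤ β xb ab + Lβ * δ := by
    rw [hβ, hβ, hLβ]
    have h1 : eNorm a ≤ eNorm ab + ‖K * S⁻¹‖ * δ := by
      rw [ha]; exact le_trans (eNorm_add_le _ _) (by linarith)
    have h2 : eNorm (V *ᵥ x) ≤ eNorm (V *ᵥ xb) + ‖V * S⁻¹‖ * δ := by
      have hx : x = xb + e := by rw [he]; abel
      rw [hx, mulVec_add]
      exact le_trans (eNorm_add_le _ _) (by linarith)
    nlinarith [mul_le_mul_of_nonneg_left h1 ha₀, mul_le_mul_of_nonneg_left h2 hb₀]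
  -- first term
  have hterm1 : pNorm P ((A + B * K) *ᵥ e) ≤ ρ * δ :=
    le_trans (hcontr e) (mul_le_mul_of_nonneg_left hδ (le_of_lt hρ.1))
  -- second term
  have hterm2 : eNorm (S *ᵥ (B *ᵥ Δ)) ≤ d * β x a := by
    rw [mulVec_mulVec, hd]
    exact le_trans (eNorm_mulVec_le _ _)
      (mul_le_mul_of_nonneg_left hΔbound (norm_nonneg _))
  have hsplit : pNorm P (xp - xbp) ≤ pNorm P ((A + B * K) *ᵥ e) + d * β x a := by
    rw [hdecomp, pNorm_eq P hP, mulVec_add]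
    refine le_trans (eNorm_add_le _ _) ?_
    rw [← pNorm_eq P hP]
    exact add_le_add_right hterm2 _
  have hfinal : d * β x a ≤ d * β xb ab + d * Lβ * δ := by
    nlinarith [mul_le_mul_of_nonneg_left hβx hd0]
  nlinarith
end

section
/- Let A, E, Y, B be real matrices with E symmetric positive definite, and ρ > 0. Define P = E⁻¹ and K = Y E⁻¹. Then the block matrix [[ρ²E, (AE + BY)ᵀ], [AE + BY, E]] is positive semidefinite if and only if ‖(A + BK)x‖_P ≤ ρ‖x‖_P for all x ∈ ℝⁿ, where ‖x‖_P = √(xᵀPx). -/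
open scoped Matrix.Norms.L2Operator
open Matrix

theorem stmt_18 {n m : ℕ} (A : Matrix (Fin n) (Fin n) ℝ) (B : Matrix (Fin n) (Fin m) ℝ)
    (E : Matrix (Fin n) (Fin n) ℝ) (Y : Matrix (Fin m) (Fin n) ℝ)
    (hE : E.PosDef) (ρ : ℝ) (hρ : 0 < ρ)
    (P : Matrix (Fin n) (Fin n) ℝ) (hPdef : P = E⁻¹)
    (K : Matrix (Fin m) (Fin n) ℝ) (hKdef : K = Y * E⁻¹) :
    (Matrix.fromBlocks ((ρ ^ 2) • E) (A * E + B * Y)ᵀ (A * E + B * Y) E).PosSemidef ↔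
      ∀ x : Fin n → ℝ, pNorm P ((A + B * K) *ᵥ x) ≤ ρ * pNorm P x := by
  haveI : Invertible E := hE.isUnit.invertible
  set M : Matrix (Fin n) (Fin n) ℝ := A + B * K with hM
  have hP : P.PosDef := hPdef ▸ hE.inv
  have hPH : Pᵀ = P := by
    have := hP.1
    rwa [Matrix.IsHermitian, conjTranspose_eq_transpose_of_trivial] at this
  have hEH : Eᵀ = E := by
    have := hE.1
    rwa [Matrix.IsHermitian, conjTranspose_eq_transpose_of_trivial] at this
  have hME : A * E + B * Y = M * E := by
    rw [hM, hKdef, Matrix.add_mul, Matrix.mul_assoc B, Matrix.mul_assoc Y E⁻¹ E,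
      Matrix.nonsing_inv_mul E (Matrix.isUnit_det_of_invertible E), Matrix.mul_one]
  -- The Schur complement step
  have hconj : ((M * E)ᵀ)ᴴ = M * E := by
    rw [conjTranspose_eq_transpose_of_trivial, Matrix.transpose_transpose]
  have hschur : (Matrix.fromBlocks ((ρ ^ 2) • E) (A * E + B * Y)ᵀ (A * E + B * Y) E).PosSemidef ↔
      ((ρ ^ 2) • E - (M * E)ᵀ * E⁻¹ * (M * E)).PosSemidef := by
    rw [hME]
    have := Matrix.PosDef.fromBlocks₂₂ ((ρ ^ 2) • E) ((M * E)ᵀ) hE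
    rw [hconj] at this
    exact this
  -- Congruence: ρ²E - (ME)ᵀ E⁻¹ (ME) = E (ρ²P - MᵀPM) E
  set Q : Matrix (Fin n) (Fin n) ℝ := (ρ ^ 2) • P - Mᵀ * P * M with hQ
  have hEQE : (ρ ^ 2) • E - (M * E)ᵀ * E⁻¹ * (M * E) = E * Q * E := by
    rw [hQ, Matrix.transpose_mul, hEH, ← hPdef]
    have hEPE : E * P * E = E := by
      rw [hPdef, Matrix.mul_nonsing_inv E (Matrix.isUnit_det_of_invertible E), Matrix.one_mul]
    rw [Matrix.mul_sub, Matrix.sub_mul, Matrix.mul_smul, Matrix.smul_mul, hEPE]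
    congr 1
    simp [Matrix.mul_assoc]
  have hQherm : Q.IsHermitian := by
    show Qᴴ = Q
    rw [conjTranspose_eq_transpose_of_trivial, hQ, Matrix.transpose_sub, Matrix.transpose_smul,
      Matrix.transpose_mul, Matrix.transpose_mul, Matrix.transpose_transpose, hPH,
      Matrix.mul_assoc]
  have hcong : ((ρ ^ 2) • E - (M * E)ᵀ * E⁻¹ * (M * E)).PosSemidef ↔ Q.PosSemidef := by
    rw [hEQE]
    constructor
    · intro h
      have h2 := h.conjTranspose_mul_mul_same (E⁻¹)
      have heq : (E⁻¹)ᴴ * (E * Q * E) * E⁻¹ = Q := by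
        rw [conjTranspose_eq_transpose_of_trivial, ← hPdef, hPH, hPdef,
          ← Matrix.mul_assoc E⁻¹ (E * Q) E, ← Matrix.mul_assoc E⁻¹ E Q,
          Matrix.nonsing_inv_mul E (Matrix.isUnit_det_of_invertible E), Matrix.one_mul,
          Matrix.mul_assoc Q E E⁻¹,
          Matrix.mul_nonsing_inv E (Matrix.isUnit_det_of_invertible E), Matrix.mul_one]
      rwa [heq] at h2
    · intro h
      have h2 := h.conjTranspose_mul_mul_same E
      rwa [conjTranspose_eq_transpose_of_trivial, hEH] at h2
  rw [hschur, hcong]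
  -- Quadratic form computations
  have hquad : ∀ x : Fin n → ℝ, x ⬝ᵥ Q *ᵥ x =
      ρ ^ 2 * (x ⬝ᵥ P *ᵥ x) - (M *ᵥ x) ⬝ᵥ P *ᵥ (M *ᵥ x) := by
    intro x
    rw [hQ, Matrix.sub_mulVec, dotProduct_sub, Matrix.smul_mulVec,
      dotProduct_smul, smul_eq_mul]
    congr 1
    rw [Matrix.mul_assoc, ← Matrix.mulVec_mulVec, Matrix.dotProduct_mulVec,
      Matrix.vecMul_transpose, ← Matrix.mulVec_mulVec, Matrix.mulVec_mulVec]
  have hPnn : ∀ x : Fin n → ℝ, 0 ≤ x ⬝ᵥ P *ᵥ x := by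
    intro x
    have := hP.posSemidef.dotProduct_mulVec_nonneg x
    simpa using this
  constructor
  · intro h x
    have h2 := h.dotProduct_mulVec_nonneg x
    simp only [star_trivial] at h2
    rw [hquad x] at h2
    have hab : (M *ᵥ x) ⬝ᵥ P *ᵥ (M *ᵥ x) ≤ ρ ^ 2 * (x ⬝ᵥ P *ᵥ x) := by linarith
    unfold pNorm
    calc Real.sqrt ((M *ᵥ x) ⬝ᵥ P *ᵥ (M *ᵥ x)) ≤ Real.sqrt (ρ ^ 2 * (x ⬝ᵥ P *ᵥ x)) :=
          Real.sqrt_le_sqrt hab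
      _ = ρ * Real.sqrt (x ⬝ᵥ P *ᵥ x) := by
          rw [Real.sqrt_mul (by positivity), Real.sqrt_sq hρ.le]
  · intro h
    refine .of_dotProduct_mulVec_nonneg hQherm fun x => ?_
    simp only [star_trivial]
    rw [hquad x]
    have hx := h x
    unfold pNorm at hx
    have h1 : (M *ᵥ x) ⬝ᵥ P *ᵥ (M *ᵥ x) ≤ ρ ^ 2 * (x ⬝ᵥ P *ᵥ x) := by
      have h2 := mul_self_le_mul_self (Real.sqrt_nonneg ((M *ᵥ x) ⬝ᵥ P *ᵥ (M *ᵥ x))) hx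
      rw [Real.mul_self_sqrt (hPnn (M *ᵥ x))] at h2
      have hb := Real.sq_sqrt (hPnn x)
      nlinarith [h2, hb]
    linarith
end
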